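/- Let n, m, ℓ, r be positive integers. Let S_L = {i_1 < i_2 < ⋯ < i_ℓ} with i_ℓ = m, let S_R = {j_1 < j_2 < ⋯ < j_r} with j_1 = 2 and j_r ≤ n − m − 2, and let S = S_L ∪ {m+1+j : j ∈ S_R}. Then |P_S(n)| = C(n, m+1) · |P_{S_L}(m+1)| · |P_{S_R}(n−(m+1))|, where C(n, m+1) is the binomial coefficient. -/

import Mathlib

/-- `IsPeak π i` says that the (1-based) position `i` is a peak of the permutation `π` of
`{1,…,n}` (modeled as `Fin n`, zero-based): `2 ≤ i ≤ n-1` and `π(i-1) < π(i) > π(i+1)`. -/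
def IsPeak {n : ℕ} (π : Equiv.Perm (Fin n)) (i : ℕ) : Prop :=
  ∃ (h2 : 2 ≤ i) (hn : i < n),
    π ⟨i - 2, by omega⟩ < π ⟨i - 1, by omega⟩ ∧ π ⟨i, hn⟩ < π ⟨i - 1, by omega⟩

/-- `peakSetCount n S` is the number of permutations of `{1,…,n}` whose set of peaks is
exactly `S`. -/
noncomputable def peakSetCount (n : ℕ) (S : Finset ℕ) : ℕ :=
  Nat.card {π : Equiv.Perm (Fin n) // ∀ i : ℕ, IsPeak π i ↔ i ∈ S}

section Build

variable {n k l : ℕ}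

def buildPerm (h : k + l = n) (A : Finset (Fin n)) (hA : A.card = k) (hA' : Aᶜ.card = l)
    (σ1 : Equiv.Perm (Fin k)) (σ2 : Equiv.Perm (Fin l)) : Equiv.Perm (Fin n) :=
  ((finCongr h.symm).trans finSumFinEquiv.symm).trans
    ((σ1.sumCongr σ2).trans
      ((Equiv.sumCongr (A.orderIsoOfFin hA).toEquiv
        ((Aᶜ.orderIsoOfFin hA').toEquiv.trans
          (Equiv.subtypeEquivRight (fun x => Finset.mem_compl)))).trans
        (Equiv.sumCompl (· ∈ A))))

theorem buildPerm_apply_left (h : k + l = n) (A : Finset (Fin n)) (hA : A.card = k)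
    (hA' : Aᶜ.card = l) (σ1 : Equiv.Perm (Fin k)) (σ2 : Equiv.Perm (Fin l))
    {i : ℕ} (hik : i < k) (hin : i < n) :
    buildPerm h A hA hA' σ1 σ2 ⟨i, hin⟩ = (A.orderIsoOfFin hA (σ1 ⟨i, hik⟩) : Fin n) := by
  have h1 : (finSumFinEquiv (m := k) (n := l)).symm ⟨i, by omega⟩ = Sum.inl ⟨i, hik⟩ := by
    rw [Equiv.symm_apply_eq]; simp [finSumFinEquiv, Fin.addCases, hik]
  simp [buildPerm, finCongr, Fin.cast, h1]

theorem buildPerm_apply_right (h : k + l = n) (A : Finset (Fin n)) (hA : A.card = k)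
    (hA' : Aᶜ.card = l) (σ1 : Equiv.Perm (Fin k)) (σ2 : Equiv.Perm (Fin l))
    {i : ℕ} (hik : k ≤ i) (hin : i < n) :
    buildPerm h A hA hA' σ1 σ2 ⟨i, hin⟩ =
      (Aᶜ.orderIsoOfFin hA' (σ2 ⟨i - k, by omega⟩) : Fin n) := by
  have h1 : (finSumFinEquiv (m := k) (n := l)).symm ⟨i, by omega⟩ =
      Sum.inr ⟨i - k, by omega⟩ := by
    rw [Equiv.symm_apply_eq]
    simp only [finSumFinEquiv, Equiv.coe_fn_mk, Fin.natAdd]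
    ext; simp; omega
  simp [buildPerm, finCongr, Fin.cast, h1]

end Build

section Build2

variable {n k l : ℕ} (h : k + l = n) (A : Finset (Fin n)) (hA : A.card = k)
    (hA' : Aᶜ.card = l) (σ1 : Equiv.Perm (Fin k)) (σ2 : Equiv.Perm (Fin l))

theorem buildPerm_lt_left {i j : ℕ} (hik : i < k) (hjk : j < k) (hin : i < n) (hjn : j < n) :
    buildPerm h A hA hA' σ1 σ2 ⟨i, hin⟩ < buildPerm h A hA hA' σ1 σ2 ⟨j, hjn⟩ ↔
      σ1 ⟨i, hik⟩ < σ1 ⟨j, hjk⟩ := by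
  rw [buildPerm_apply_left h A hA hA' σ1 σ2 hik, buildPerm_apply_left h A hA hA' σ1 σ2 hjk,
    Subtype.coe_lt_coe, OrderIso.lt_iff_lt]

theorem buildPerm_lt_right {i j i' j' : ℕ} (hi : i = k + i') (hj : j = k + j')
    (hi' : i' < l) (hj' : j' < l) (hin : i < n) (hjn : j < n) :
    buildPerm h A hA hA' σ1 σ2 ⟨i, hin⟩ < buildPerm h A hA hA' σ1 σ2 ⟨j, hjn⟩ ↔
      σ2 ⟨i', hi'⟩ < σ2 ⟨j', hj'⟩ := by
  rw [buildPerm_apply_right h A hA hA' σ1 σ2 (by omega : k ≤ i),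
    buildPerm_apply_right h A hA hA' σ1 σ2 (by omega : k ≤ j),
    Subtype.coe_lt_coe, OrderIso.lt_iff_lt]
  have e1 : (⟨i - k, by omega⟩ : Fin l) = ⟨i', hi'⟩ := by simp only [Fin.mk.injEq]; omega
  have e2 : (⟨j - k, by omega⟩ : Fin l) = ⟨j', hj'⟩ := by simp only [Fin.mk.injEq]; omega
  rw [e1, e2]

theorem isPeak_buildPerm_low {i : ℕ} (hik : i < k) :
    IsPeak (buildPerm h A hA hA' σ1 σ2) i ↔ IsPeak σ1 i := by
  have hkn : k ≤ n := by omega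
  constructor
  · rintro ⟨h2, hn', ha, hb⟩
    exact ⟨h2, hik,
      (buildPerm_lt_left h A hA hA' σ1 σ2 (by omega) (by omega) (by omega) (by omega)).mp ha,
      (buildPerm_lt_left h A hA hA' σ1 σ2 hik (by omega) (by omega) (by omega)).mp hb⟩
  · rintro ⟨h2, hn', ha, hb⟩
    exact ⟨h2, by omega,
      (buildPerm_lt_left h A hA hA' σ1 σ2 (by omega) (by omega) (by omega) (by omega)).mpr ha,
      (buildPerm_lt_left h A hA hA' σ1 σ2 hik (by omega) (by omega) (by omega)).mpr hb⟩

theorem isPeak_buildPerm_high {i : ℕ} (hik : k + 2 ≤ i) :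
    IsPeak (buildPerm h A hA hA' σ1 σ2) i ↔ IsPeak σ2 (i - k) := by
  constructor
  · rintro ⟨h2, hn', ha, hb⟩
    refine ⟨by omega, by omega, ?_, ?_⟩
    · exact (buildPerm_lt_right h A hA hA' σ1 σ2 (i := i - 2) (j := i - 1)
        (i' := i - k - 2) (j' := i - k - 1) (by omega) (by omega) (by omega) (by omega)
        (by omega) (by omega)).mp ha
    · exact (buildPerm_lt_right h A hA hA' σ1 σ2 (i := i) (j := i - 1)
        (i' := i - k) (j' := i - k - 1) (by omega) (by omega) (by omega) (by omega)
        hn' (by omega)).mp hb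
  · rintro ⟨h2, hn', ha, hb⟩
    have hin : i < n := by omega
    refine ⟨by omega, hin, ?_, ?_⟩
    · exact (buildPerm_lt_right h A hA hA' σ1 σ2 (i := i - 2) (j := i - 1)
        (i' := i - k - 2) (j' := i - k - 1) (by omega) (by omega) (by omega) (by omega)
        (by omega) (by omega)).mpr ha
    · exact (buildPerm_lt_right h A hA hA' σ1 σ2 (i := i) (j := i - 1)
        (i' := i - k) (j' := i - k - 1) (by omega) (by omega) (by omega) (by omega)
        hin (by omega)).mpr hb

theorem not_isPeak_buildPerm_k (hk3 : 3 ≤ k) (hkn : k < n) (hpk : IsPeak σ1 (k - 1)) :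
    ¬ IsPeak (buildPerm h A hA hA' σ1 σ2) k := by
  rintro ⟨h2, hn', ha, -⟩
  obtain ⟨p2, pn, -, hb⟩ := hpk
  have hc := (buildPerm_lt_left h A hA hA' σ1 σ2 (i := k - 2) (j := k - 1) (by omega) (by omega)
    (by omega) (by omega)).mp ha
  have e : (⟨k - 1 - 1, by omega⟩ : Fin k) = ⟨k - 2, by omega⟩ := by simp only [Fin.mk.injEq]; omega
  rw [e] at hb
  exact absurd (lt_trans hc hb) (lt_irrefl _)

theorem not_isPeak_buildPerm_k1 (hl3 : 3 ≤ l) (hpk : IsPeak σ2 2) :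
    ¬ IsPeak (buildPerm h A hA hA' σ1 σ2) (k + 1) := by
  rintro ⟨h2, hn', -, hb⟩
  obtain ⟨p2, pn, ha, -⟩ := hpk
  have hc := (buildPerm_lt_right h A hA hA' σ1 σ2 (i := k + 1) (j := k + 1 - 1)
    (i' := 1) (j' := 0) (by omega) (by omega) (by omega) (by omega)
    (by omega) (by omega)).mp hb
  have ha2 : σ2 ⟨0, by omega⟩ < σ2 ⟨1, by omega⟩ := ha
  exact absurd (lt_trans hc ha2) (lt_irrefl _)

end Build2

section Bij

variable {n k l : ℕ}

/-- The parameter space. -/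
def TT (n k l : ℕ) : Type :=
  {A : Finset (Fin n) // A.card = k} × Equiv.Perm (Fin k) × Equiv.Perm (Fin l)

instance : Fintype (TT n k l) := by unfold TT; infer_instance

theorem compl_card (h : k + l = n) {A : Finset (Fin n)} (hA : A.card = k) : Aᶜ.card = l := by
  rw [Finset.card_compl, hA, Fintype.card_fin]; omega

/-- The map from parameters to permutations. -/
def FF (h : k + l = n) (t : TT n k l) : Equiv.Perm (Fin n) :=
  buildPerm h t.1.1 t.1.2 (compl_card h t.1.2) t.2.1 t.2.2

theorem mem_A_iff (h : k + l = n) (A : Finset (Fin n)) (hA : A.card = k)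
    (hA' : Aᶜ.card = l) (σ1 : Equiv.Perm (Fin k)) (σ2 : Equiv.Perm (Fin l)) (x : Fin n) :
    x ∈ A ↔ ∃ (i : ℕ) (hik : i < k) (hin : i < n),
      buildPerm h A hA hA' σ1 σ2 ⟨i, hin⟩ = x := by
  constructor
  · intro hx
    refine ⟨(σ1.symm ((A.orderIsoOfFin hA).symm ⟨x, hx⟩)).1,
      (σ1.symm ((A.orderIsoOfFin hA).symm ⟨x, hx⟩)).2, by omega, ?_⟩
    rw [buildPerm_apply_left h A hA hA' σ1 σ2 (σ1.symm ((A.orderIsoOfFin hA).symm ⟨x, hx⟩)).2]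
    simp [Fin.eta]
  · rintro ⟨i, hik, hin, rfl⟩
    rw [buildPerm_apply_left h A hA hA' σ1 σ2 hik]
    exact (A.orderIsoOfFin hA (σ1 ⟨i, hik⟩)).2

theorem FF_inj (h : k + l = n) : Function.Injective (FF h) := by
  rintro ⟨⟨A, hA⟩, σ1, σ2⟩ ⟨⟨A', hA'⟩, σ1', σ2'⟩ heq
  simp only [FF] at heq
  have hAA : A = A' := by
    ext x
    rw [mem_A_iff h A hA (compl_card h hA) σ1 σ2 x,
      mem_A_iff h A' hA' (compl_card h hA') σ1' σ2' x]
    constructor <;> (rintro ⟨i, hik, hin, hx⟩; exact ⟨i, hik, hin, by rw [← hx, heq]⟩)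
  subst hAA
  have hs1 : σ1 = σ1' := by
    ext i
    have := congrArg (fun π : Equiv.Perm (Fin n) => π ⟨i.1, by omega⟩) heq
    rw [buildPerm_apply_left h A hA (compl_card h hA) σ1 σ2 i.2,
      buildPerm_apply_left h A hA' (compl_card h hA') σ1' σ2' i.2] at this
    have := (A.orderIsoOfFin hA).injective (Subtype.coe_injective this)
    exact congrArg Fin.val this
  have hs2 : σ2 = σ2' := by
    ext j
    have hjn : k + j.1 < n := by omega
    have hthis := congrArg (fun π : Equiv.Perm (Fin n) => π ⟨k + j.1, hjn⟩) heq
    rw [buildPerm_apply_right h A hA (compl_card h hA) σ1 σ2 (Nat.le_add_right k j.1),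
      buildPerm_apply_right h A hA' (compl_card h hA') σ1' σ2' (Nat.le_add_right k j.1)]
      at hthis
    have h2 := (Aᶜ.orderIsoOfFin (compl_card h hA)).injective (Subtype.coe_injective hthis)
    have e : (⟨k + j.1 - k, by omega⟩ : Fin l) = j := by
      apply Fin.ext; simp only [Fin.val_mk]; omega
    rw [e] at h2
    exact congrArg Fin.val h2
  subst hs1; subst hs2
  rfl

end Bij

section Bij2

variable {n k l : ℕ}

theorem card_TT (h : k + l = n) : Fintype.card (TT n k l) = Fintype.card (Equiv.Perm (Fin n)) := by
  have hkn : k ≤ n := by omega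
  have : Fintype.card (TT n k l) =
      Fintype.card {A : Finset (Fin n) // A.card = k} *
        (Fintype.card (Equiv.Perm (Fin k)) * Fintype.card (Equiv.Perm (Fin l))) := by
    unfold TT; rw [Fintype.card_prod, Fintype.card_prod]
  simp only [this, Fintype.card_finset_len, Fintype.card_perm, Fintype.card_fin]
  have hl : l = n - k := by omega
  rw [hl, ← mul_assoc, Nat.choose_mul_factorial_mul_factorial hkn]

theorem FF_bij (h : k + l = n) : Function.Bijective (FF h) :=
  (Fintype.bijective_iff_injective_and_card (FF h)).mpr ⟨FF_inj h, card_TT h⟩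

/-- The bijection between parameters and permutations. -/
noncomputable def EE (h : k + l = n) : TT n k l ≃ Equiv.Perm (Fin n) :=
  Equiv.ofBijective (FF h) (FF_bij h)

end Bij2

section Key

variable {n m l : ℕ}

theorem memS_iff (SL SR : Finset ℕ) (hmaxL : ∀ x ∈ SL, x ≤ m) (hminR : ∀ x ∈ SR, 2 ≤ x)
    (i : ℕ) :
    (i ∈ SL ∪ SR.image (fun j => m + 1 + j)) ↔ (i ∈ SL ∨ ∃ j ∈ SR, m + 1 + j = i) := by
  simp [Finset.mem_union, Finset.mem_image]

theorem key (h : (m + 1) + l = n) (hl3 : 3 ≤ l)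
    (SL SR : Finset ℕ) (hmL : m ∈ SL) (hmaxL : ∀ x ∈ SL, x ≤ m)
    (h2R : 2 ∈ SR) (hminR : ∀ x ∈ SR, 2 ≤ x)
    (A : Finset (Fin n)) (hA : A.card = m + 1) (hA' : Aᶜ.card = l)
    (σ1 : Equiv.Perm (Fin (m + 1))) (σ2 : Equiv.Perm (Fin l)) :
    (∀ i, IsPeak (buildPerm h A hA hA' σ1 σ2) i ↔ i ∈ SL ∪ SR.image (fun j => m + 1 + j)) ↔
      ((∀ i, IsPeak σ1 i ↔ i ∈ SL) ∧ (∀ i, IsPeak σ2 i ↔ i ∈ SR)) := by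
  simp only [memS_iff SL SR hmaxL hminR]
  constructor
  · intro hp
    constructor
    · intro i
      by_cases hik : i < m + 1
      · rw [← isPeak_buildPerm_low h A hA hA' σ1 σ2 hik, hp i]
        constructor
        · rintro (hi | ⟨j, hj, rfl⟩)
          · exact hi
          · exact absurd (hminR j hj) (by omega)
        · exact Or.inl
      · constructor
        · rintro ⟨h2, hn', -, -⟩; omega
        · intro hi; exact absurd (hmaxL i hi) (by omega)
    · intro j
      by_cases hj2 : 2 ≤ j ∧ j < l
      · have hkey := isPeak_buildPerm_high h A hA hA' σ1 σ2 (i := m + 1 + j) (by omega)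
        have e : m + 1 + j - (m + 1) = j := by omega
        rw [e] at hkey
        rw [← hkey, hp (m + 1 + j)]
        constructor
        · rintro (hi | ⟨j', hj', he⟩)
          · exact absurd (hmaxL _ hi) (by omega)
          · have : j' = j := by omega
            rwa [← this]
        · intro hj; exact Or.inr ⟨j, hj, rfl⟩
      · constructor
        · rintro ⟨h2, hn', -, -⟩; omega
        · intro hj
          have h1 := hminR j hj
          have h2 := hp (m + 1 + j)
          have hpk : IsPeak (buildPerm h A hA hA' σ1 σ2) (m + 1 + j) :=
            h2.mpr (Or.inr ⟨j, hj, rfl⟩)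
          obtain ⟨-, hn', -, -⟩ := hpk
          omega
  · rintro ⟨h1, h2s⟩ i
    have hpk1 : IsPeak σ1 m := (h1 m).mpr hmL
    have hm2 : 2 ≤ m := hpk1.1
    have hpk2 : IsPeak σ2 2 := (h2s 2).mpr h2R
    rcases lt_or_ge i (m + 1) with hik | hik
    · rw [isPeak_buildPerm_low h A hA hA' σ1 σ2 hik, h1 i]
      constructor
      · exact Or.inl
      · rintro (hi | ⟨j, hj, rfl⟩)
        · exact hi
        · exact absurd (hminR j hj) (by omega)
    · rcases eq_or_lt_of_le hik with he | hik1
      · refine iff_of_false ?_ ?_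
        · rw [← he]
          have : IsPeak σ1 ((m + 1) - 1) := by
            have e : m + 1 - 1 = m := by omega
            rw [e]; exact hpk1
          exact not_isPeak_buildPerm_k h A hA hA' σ1 σ2 (by omega) (by omega) this
        · rintro (hi | ⟨j, hj, hji⟩)
          · exact absurd (hmaxL _ hi) (by omega)
          · have := hminR j hj; omega
      · rcases eq_or_lt_of_le (Nat.succ_le_of_lt hik1) with he | hik2
        · refine iff_of_false ?_ ?_
          · have : i = (m + 1) + 1 := by omega
            rw [this]
            exact not_isPeak_buildPerm_k1 h A hA hA' σ1 σ2 hl3 hpk2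
          · rintro (hi | ⟨j, hj, hji⟩)
            · exact absurd (hmaxL _ hi) (by omega)
            · have := hminR j hj; omega
        · rw [isPeak_buildPerm_high h A hA hA' σ1 σ2 (by omega), h2s (i - (m + 1))]
          constructor
          · intro hj; exact Or.inr ⟨i - (m + 1), hj, by omega⟩
          · rintro (hi | ⟨j, hj, hji⟩)
            · exact absurd (hmaxL _ hi) (by omega)
            · have : j = i - (m + 1) := by omega
              rwa [← this]

end Key

/-- Splitting the subtype of the parameter space. -/
def split3 (n k l : ℕ) (Q1 : Equiv.Perm (Fin k) → Prop) (Q2 : Equiv.Perm (Fin l) → Prop) :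
    {t : TT n k l // Q1 t.2.1 ∧ Q2 t.2.2} ≃
      {A : Finset (Fin n) // A.card = k} × {σ // Q1 σ} × {σ // Q2 σ} where
  toFun t := (t.1.1, ⟨t.1.2.1, t.2.1⟩, ⟨t.1.2.2, t.2.2⟩)
  invFun x := ⟨(x.1, x.2.1.1, x.2.2.1), x.2.1.2, x.2.2.2⟩
  left_inv t := rfl
  right_inv x := rfl

theorem stmt19 (n m ℓ r : ℕ) (hn : 0 < n) (hm : 0 < m) (hℓ : 0 < ℓ) (hr : 0 < r)
    (SL SR : Finset ℕ) (hcardL : SL.card = ℓ) (hcardR : SR.card = r)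
    (hmL : m ∈ SL) (hmaxL : ∀ x ∈ SL, x ≤ m)
    (h2R : 2 ∈ SR) (hminR : ∀ x ∈ SR, 2 ≤ x) (hmaxR : ∀ x ∈ SR, x ≤ n - m - 2) :
    peakSetCount n (SL ∪ SR.image (fun j => m + 1 + j)) =
      n.choose (m + 1) * peakSetCount (m + 1) SL * peakSetCount (n - (m + 1)) SR := by
  have hn4 : m + 4 ≤ n := by have := hmaxR 2 h2R; omega
  have h : (m + 1) + (n - (m + 1)) = n := by omega
  have hl3 : 3 ≤ n - (m + 1) := by omega
  unfold peakSetCount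
  have e1 : {t : TT n (m + 1) (n - (m + 1)) //
        (∀ i, IsPeak t.2.1 i ↔ i ∈ SL) ∧ (∀ i, IsPeak t.2.2 i ↔ i ∈ SR)} ≃
      {π : Equiv.Perm (Fin n) //
        ∀ i, IsPeak π i ↔ i ∈ SL ∪ SR.image (fun j => m + 1 + j)} := by
    refine (EE h).subtypeEquiv fun t => ?_
    exact (key h hl3 SL SR hmL hmaxL h2R hminR t.1.1 t.1.2 (compl_card h t.1.2)
      t.2.1 t.2.2).symm
  rw [← Nat.card_congr e1, Nat.card_congr (split3 n (m + 1) (n - (m + 1)) (fun σ => ∀ i, IsPeak σ i ↔ i ∈ SL) (fun σ => ∀ i, IsPeak σ i ↔ i ∈ SR)),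
    Nat.card_prod, Nat.card_prod, Nat.card_eq_fintype_card, Fintype.card_finset_len,
    Fintype.card_fin, mul_assoc]
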